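/- Let V be an A-module, let ∇̄ : V → V be an A-linear map, and let ϖ_0 : V ⊗_A B → B be a surjective B-linear map such that r·ϖ_0((∇̄⊗id_B)(x)) = μ̂_0·ϖ_0(x) for all x ∈ V ⊗_A B, where μ̂_0 ∈ B is an element whose coefficient of w^1 is nonzero. Then the restriction of ϖ_0 to V, namely the map V → B, a ↦ ϖ_0(a⊗1), is surjective. -/

import Mathlib

open Polynomial TensorProduct

noncomputable section

/-- The ring `A = ℂ[z]/(z^m)`. -/
def Amod (m : ℕ) : Type :=
  Polynomial ℂ ⧸ Ideal.span {(Polynomial.X : Polynomial ℂ) ^ m}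

instance (m : ℕ) : CommRing (Amod m) :=
  inferInstanceAs (CommRing (Polynomial ℂ ⧸ Ideal.span {(Polynomial.X : Polynomial ℂ) ^ m}))

instance (m : ℕ) : Algebra ℂ (Amod m) :=
  inferInstanceAs (Algebra ℂ (Polynomial ℂ ⧸ Ideal.span {(Polynomial.X : Polynomial ℂ) ^ m}))

/-- The ring `B = ℂ[w]/(w^N)` with `N = m*r - r + 1`. -/
def Bmod (m r : ℕ) : Type :=
  Polynomial ℂ ⧸ Ideal.span {(Polynomial.X : Polynomial ℂ) ^ (m * r - r + 1)}

instance (m r : ℕ) : CommRing (Bmod m r) :=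
  inferInstanceAs
    (CommRing (Polynomial ℂ ⧸ Ideal.span {(Polynomial.X : Polynomial ℂ) ^ (m * r - r + 1)}))

instance (m r : ℕ) : Algebra ℂ (Bmod m r) :=
  inferInstanceAs
    (Algebra ℂ (Polynomial ℂ ⧸ Ideal.span {(Polynomial.X : Polynomial ℂ) ^ (m * r - r + 1)}))

/-- The class of a polynomial in `A = ℂ[z]/(z^m)`. -/
def Amod.mk (m : ℕ) (p : Polynomial ℂ) : Amod m :=
  (Ideal.Quotient.mk (Ideal.span {(Polynomial.X : Polynomial ℂ) ^ m}) p : _)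

/-- The class of a polynomial in `B = ℂ[w]/(w^N)`. -/
def Bmod.mk (m r : ℕ) (p : Polynomial ℂ) : Bmod m r :=
  (Ideal.Quotient.mk (Ideal.span {(Polynomial.X : Polynomial ℂ) ^ (m * r - r + 1)}) p : _)

/-- The element `z ∈ A`. -/
def Amod.z (m : ℕ) : Amod m := Amod.mk m Polynomial.X

/-- The element `w ∈ B`. -/
def Bmod.w (m r : ℕ) : Bmod m r := Bmod.mk m r Polynomial.X

/-- The coefficient of `w^j` in the unique polynomial representative of degree `< N` of an
element of `B = ℂ[w]/(w^N)` (for `j < N`). -/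
noncomputable def Bmod.coeff (m r : ℕ) (j : ℕ) (b : Bmod m r) : ℂ :=
  ((Quotient.out
      (show Polynomial ℂ ⧸ Ideal.span {(Polynomial.X : Polynomial ℂ) ^ (m * r - r + 1)} from b))
      %ₘ (Polynomial.X ^ (m * r - r + 1))).coeff j

/-- The canonical map `ℂ[z]/(z^m) → ℂ[w]/(w^N)`, `z ↦ w^r` (raw version). -/
noncomputable def AtoB0 (m r : ℕ) [NeZero m] :
    (Polynomial ℂ ⧸ Ideal.span {(Polynomial.X : Polynomial ℂ) ^ m}) →+*
      (Polynomial ℂ ⧸ Ideal.span {(Polynomial.X : Polynomial ℂ) ^ (m * r - r + 1)}) :=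
  Ideal.Quotient.lift (Ideal.span {(Polynomial.X : Polynomial ℂ) ^ m})
    ((Ideal.Quotient.mk (Ideal.span {(Polynomial.X : Polynomial ℂ) ^ (m * r - r + 1)})).comp
      (if 1 ≤ r then (Polynomial.aeval ((Polynomial.X : Polynomial ℂ) ^ r)).toRingHom
       else (Polynomial.aeval (0 : Polynomial ℂ)).toRingHom))
    (by
      intro a ha
      rw [Ideal.mem_span_singleton] at ha
      obtain ⟨c, rfl⟩ := ha
      rw [map_mul]
      apply mul_eq_zero_of_left
      have hm : 1 ≤ m := Nat.one_le_iff_ne_zero.mpr (NeZero.ne m)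
      by_cases h : 1 ≤ r
      · rw [if_pos h, map_pow, RingHom.comp_apply, AlgHom.toRingHom_eq_coe, RingHom.coe_coe,
          Polynomial.aeval_X, ← map_pow, ← pow_mul, Ideal.Quotient.eq_zero_iff_mem,
          Ideal.mem_span_singleton]
        have h1 : r ≤ r * m := Nat.le_mul_of_pos_right r (by omega)
        have h2 : m * r = r * m := Nat.mul_comm m r
        exact pow_dvd_pow _ (by omega)
      · rw [if_neg h, map_pow, RingHom.comp_apply, AlgHom.toRingHom_eq_coe, RingHom.coe_coe,
          Polynomial.aeval_X, map_zero, zero_pow (NeZero.ne m)])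

/-- The canonical map `A → B`, `z ↦ w^r`. -/
noncomputable def AtoB (m r : ℕ) [NeZero m] : Amod m →+* Bmod m r := AtoB0 m r

noncomputable instance (m r : ℕ) [NeZero m] : Algebra (Amod m) (Bmod m r) :=
  (AtoB m r).toAlgebra

namespace S5Aux

variable (m r : ℕ)

lemma coeff_X_pow_mul_eq_zero {n k : ℕ} (hk : k < n) (q : Polynomial ℂ) :
    ((Polynomial.X : Polynomial ℂ) ^ n * q).coeff k = 0 := by
  rw [mul_comm, coeff_mul_X_pow', if_neg (by omega)]

lemma mk_surj (b : Bmod m r) : ∃ p : Polynomial ℂ, Bmod.mk m r p = b :=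
  ⟨Quotient.out (show Polynomial ℂ ⧸ Ideal.span
      {(Polynomial.X : Polynomial ℂ) ^ (m * r - r + 1)} from b), Quotient.out_eq _⟩

lemma mk_mul (p q : Polynomial ℂ) :
    Bmod.mk m r (p * q) = Bmod.mk m r p * Bmod.mk m r q :=
  map_mul (Ideal.Quotient.mk _) p q

lemma mk_pow (p : Polynomial ℂ) (k : ℕ) :
    Bmod.mk m r (p ^ k) = Bmod.mk m r p ^ k :=
  map_pow (Ideal.Quotient.mk _) p k

lemma mk_sub (p q : Polynomial ℂ) :
    Bmod.mk m r (p - q) = Bmod.mk m r p - Bmod.mk m r q :=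
  map_sub (Ideal.Quotient.mk _) p q

lemma mk_zero : Bmod.mk m r 0 = 0 :=
  map_zero (Ideal.Quotient.mk _)

lemma algebraMap_eq_mk (c : ℂ) : algebraMap ℂ (Bmod m r) c = Bmod.mk m r (Polynomial.C c) :=
  rfl

lemma smul_mk (c : ℂ) (p : Polynomial ℂ) :
    c • Bmod.mk m r p = Bmod.mk m r (Polynomial.C c * p) := by
  rw [Algebra.smul_def, algebraMap_eq_mk, ← mk_mul]

lemma coeff_mk {k : ℕ} (hk : k < m * r - r + 1) (p : Polynomial ℂ) :
    Bmod.coeff m r k (Bmod.mk m r p) = p.coeff k := by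
  classical
  have hout : Ideal.Quotient.mk (Ideal.span {(Polynomial.X : Polynomial ℂ) ^ (m * r - r + 1)})
      (Quotient.out (show Polynomial ℂ ⧸ Ideal.span
        {(Polynomial.X : Polynomial ℂ) ^ (m * r - r + 1)} from (Bmod.mk m r p)))
      = Ideal.Quotient.mk _ p := Quotient.out_eq _
  set o : Polynomial ℂ := Quotient.out (show Polynomial ℂ ⧸ Ideal.span
        {(Polynomial.X : Polynomial ℂ) ^ (m * r - r + 1)} from (Bmod.mk m r p)) with ho
  have hdvd : (Polynomial.X : Polynomial ℂ) ^ (m * r - r + 1) ∣ (o - p) := by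
    rw [← Ideal.mem_span_singleton]
    exact Ideal.Quotient.eq.mp hout
  obtain ⟨c, hc⟩ := hdvd
  have hmonic : ((Polynomial.X : Polynomial ℂ) ^ (m * r - r + 1)).Monic := monic_X_pow _
  show (o %ₘ (Polynomial.X ^ (m * r - r + 1))).coeff k = p.coeff k
  have hrep := modByMonic_add_div o ((Polynomial.X : Polynomial ℂ) ^ (m * r - r + 1))
  have h1 : o.coeff k = (o %ₘ (Polynomial.X ^ (m * r - r + 1))).coeff k := by
    conv_lhs => rw [← hrep]
    rw [coeff_add, coeff_X_pow_mul_eq_zero hk, add_zero]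
  have h2 : o.coeff k = p.coeff k := by
    have ho2 : o = p + Polynomial.X ^ (m * r - r + 1) * c := by
      rw [← hc]; ring
    rw [ho2, coeff_add, coeff_X_pow_mul_eq_zero hk, add_zero]
  rw [← h1, h2]

lemma coeff_sub {k : ℕ} (hk : k < m * r - r + 1) (x y : Bmod m r) :
    Bmod.coeff m r k (x - y) = Bmod.coeff m r k x - Bmod.coeff m r k y := by
  obtain ⟨p, rfl⟩ := mk_surj m r x
  obtain ⟨q, rfl⟩ := mk_surj m r y
  rw [← mk_sub, coeff_mk m r hk, coeff_mk m r hk, coeff_mk m r hk, Polynomial.coeff_sub]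

lemma coeff_smul {k : ℕ} (hk : k < m * r - r + 1) (c : ℂ) (x : Bmod m r) :
    Bmod.coeff m r k (c • x) = c * Bmod.coeff m r k x := by
  obtain ⟨p, rfl⟩ := mk_surj m r x
  rw [smul_mk, coeff_mk m r hk, coeff_mk m r hk, Polynomial.coeff_C_mul]

lemma mk_modByMonic (p : Polynomial ℂ) :
    Bmod.mk m r (p %ₘ Polynomial.X ^ (m * r - r + 1)) = Bmod.mk m r p := by
  show Ideal.Quotient.mk _ _ = Ideal.Quotient.mk _ _
  rw [Ideal.Quotient.eq, Ideal.mem_span_singleton]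
  refine ⟨-(p /ₘ Polynomial.X ^ (m * r - r + 1)), ?_⟩
  have h := modByMonic_add_div p ((Polynomial.X : Polynomial ℂ) ^ (m * r - r + 1))
  linear_combination h

lemma eq_zero_of_coeff_eq_zero (b : Bmod m r)
    (h : ∀ i < m * r - r + 1, Bmod.coeff m r i b = 0) : b = 0 := by
  obtain ⟨p, rfl⟩ := mk_surj m r b
  rw [← mk_modByMonic]
  have hq0 : p %ₘ Polynomial.X ^ (m * r - r + 1) = 0 := by
    apply Polynomial.ext
    intro i
    by_cases hi : i < m * r - r + 1
    · rw [← coeff_mk m r hi, mk_modByMonic]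
      simpa using h i hi
    · rw [Polynomial.coeff_zero]
      apply Polynomial.coeff_eq_zero_of_degree_lt
      calc (p %ₘ Polynomial.X ^ (m * r - r + 1)).degree
          < (Polynomial.X ^ (m * r - r + 1) : Polynomial ℂ).degree :=
            degree_modByMonic_lt p (monic_X_pow _)
        _ = (m * r - r + 1 : ℕ) := degree_X_pow _
        _ ≤ (i : ℕ) := by exact_mod_cast Nat.cast_le.mpr (le_of_not_gt hi)
  rw [hq0, mk_zero]

lemma coeff_w_pow_mul (j k : ℕ) (hk : k < m * r - r + 1) (b : Bmod m r) :
    Bmod.coeff m r k (Bmod.w m r ^ j * b) =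
      if j ≤ k then Bmod.coeff m r (k - j) b else 0 := by
  obtain ⟨p, rfl⟩ := mk_surj m r b
  have h1 : Bmod.w m r ^ j * Bmod.mk m r p = Bmod.mk m r (Polynomial.X ^ j * p) := by
    rw [show Bmod.w m r = Bmod.mk m r Polynomial.X from rfl, ← mk_pow, ← mk_mul]
  rw [h1, coeff_mk m r hk, mul_comm, coeff_mul_X_pow']
  by_cases h : j ≤ k
  · rw [if_pos h, if_pos h, coeff_mk m r (by omega)]
  · rw [if_neg h, if_neg h]

lemma exists_w_dvd (b : Bmod m r) (h : Bmod.coeff m r 0 b = 0) :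
    ∃ b', b = Bmod.w m r * b' := by
  obtain ⟨p, rfl⟩ := mk_surj m r b
  rw [coeff_mk m r (Nat.succ_pos _)] at h
  obtain ⟨q, hq⟩ := Polynomial.X_dvd_iff.mpr h
  refine ⟨Bmod.mk m r q, ?_⟩
  rw [hq, mk_mul]
  rfl

noncomputable def phi0 : Bmod m r →+* ℂ :=
  Ideal.Quotient.lift _ (Polynomial.evalRingHom 0)
    (by
      intro p hp
      rw [Ideal.mem_span_singleton] at hp
      obtain ⟨c, rfl⟩ := hp
      simp [zero_pow])

lemma phi0_mk (p : Polynomial ℂ) : phi0 m r (Bmod.mk m r p) = p.eval 0 :=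
  Ideal.Quotient.lift_mk _ _ _

lemma phi0_coeff (b : Bmod m r) : phi0 m r b = Bmod.coeff m r 0 b := by
  obtain ⟨p, rfl⟩ := mk_surj m r b
  rw [phi0_mk, coeff_mk m r (Nat.succ_pos _), Polynomial.coeff_zero_eq_eval_zero]

end S5Aux

namespace S5Aux

lemma AtoB_mk (m r : ℕ) [NeZero m] (hr : 1 ≤ r) (p : Polynomial ℂ) :
    AtoB m r (Amod.mk m p) = Bmod.mk m r (Polynomial.aeval ((Polynomial.X : Polynomial ℂ) ^ r) p) := by
  show AtoB0 m r (Ideal.Quotient.mk _ p) = _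
  rw [AtoB0, Ideal.Quotient.lift_mk, if_pos hr]
  rfl

lemma halg (m r : ℕ) [NeZero m] (hr : 1 ≤ r) (c : ℂ) :
    algebraMap (Amod m) (Bmod m r) (algebraMap ℂ (Amod m) c) = algebraMap ℂ (Bmod m r) c := by
  have h1 : algebraMap (Amod m) (Bmod m r) = (AtoB m r : Amod m →+* Bmod m r) := rfl
  have h2 : algebraMap ℂ (Amod m) c = Amod.mk m (Polynomial.C c) := rfl
  rw [h1, h2, AtoB_mk m r hr, aeval_C, algebraMap_eq_mk]
  rfl

end S5Aux

/-- If `V` is an `A`-module carrying an `A`-linear map `∇̄` compatible, via a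
surjective `B`-linear map `ϖ₀ : B ⊗[A] V → B`, with multiplication by an element `μ̂₀ ∈ B`
whose `w¹`-coefficient is nonzero, then the restriction `V → B`, `a ↦ ϖ₀(a ⊗ 1)`, is
surjective. -/
theorem statement5 (m r : ℕ) (hm : 2 ≤ m) (hr : 1 ≤ r) [NeZero m]
    (V : Type*) [AddCommGroup V] [Module (Amod m) V]
    (Db : V →ₗ[Amod m] V)
    (ϖ : Bmod m r ⊗[Amod m] V →ₗ[Bmod m r] Bmod m r)
    (hϖ : Function.Surjective ϖ)
    (μ : Bmod m r) (hμ : Bmod.coeff m r 1 μ ≠ 0)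
    (hcompat : ∀ x : Bmod m r ⊗[Amod m] V,
      (r : ℕ) • ϖ (LinearMap.lTensor (Bmod m r) Db x) = μ * ϖ x) :
    Function.Surjective (fun a : V => ϖ ((1 : Bmod m r) ⊗ₜ a)) := by
  classical
  have hn2 : 2 ≤ m * r - r + 1 := by
    have h := Nat.mul_le_mul_right (k := r) hm
    omega
  set f : V → Bmod m r := fun a => ϖ ((1 : Bmod m r) ⊗ₜ a) with hf
  -- basic closure properties of the image of f
  have hf0 : f 0 = 0 := by
    simp only [hf, TensorProduct.tmul_zero, map_zero]
  have hfsub : ∀ a a', f a - f a' = f (a - a') := by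
    intro a a'
    simp only [hf, TensorProduct.tmul_sub, map_sub]
  have hfadd : ∀ a a', f a + f a' = f (a + a') := by
    intro a a'
    simp only [hf, TensorProduct.tmul_add, map_add]
  have hmulB : ∀ (β : Bmod m r) (a : V), β * f a = ϖ (β ⊗ₜ a) := by
    intro β a
    have h : β ⊗ₜ[Amod m] a = β • ((1 : Bmod m r) ⊗ₜ[Amod m] a) := by
      rw [TensorProduct.smul_tmul', smul_eq_mul, mul_one]
    rw [h, map_smul, smul_eq_mul]
  have hsmul : ∀ (c : ℂ) (a : V), c • f a = f ((algebraMap ℂ (Amod m) c) • a) := by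
    intro c a
    rw [Algebra.smul_def, hmulB]
    show ϖ _ = ϖ _
    congr 1
    rw [← S5Aux.halg m r hr c, Algebra.algebraMap_eq_smul_one, TensorProduct.smul_tmul]
  have hμmul : ∀ a : V, μ * f a = f ((algebraMap ℂ (Amod m) (r : ℂ)) • Db a) := by
    intro a
    have hcmp := hcompat ((1 : Bmod m r) ⊗ₜ a)
    rw [LinearMap.lTensor_tmul] at hcmp
    rw [← hcmp, ← Nat.cast_smul_eq_nsmul ℂ r (ϖ ((1 : Bmod m r) ⊗ₜ Db a))]
    exact hsmul (r : ℂ) (Db a)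
  -- the unit in the image
  obtain ⟨x1, hx1⟩ := hϖ 1
  have key : ∀ x : Bmod m r ⊗[Amod m] V,
      S5Aux.phi0 m r (ϖ x) ≠ 0 → ∃ a, S5Aux.phi0 m r (f a) ≠ 0 := by
    intro x
    induction x using TensorProduct.induction_on with
    | zero => intro h; exact absurd (by rw [map_zero, map_zero]) h
    | tmul b a =>
      intro h
      refine ⟨a, fun h0 => h ?_⟩
      rw [← hmulB, map_mul, h0, mul_zero]
    | add x y hx hy =>
      intro h
      rw [map_add, map_add] at h
      by_cases h1 : S5Aux.phi0 m r (ϖ x) = 0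
      · exact hy (by rw [h1, zero_add] at h; exact h)
      · exact hx h1
  obtain ⟨a₀, ha₀⟩ := key x1 (by rw [hx1, map_one]; exact one_ne_zero)
  set u := f a₀ with hu
  set ν := μ - algebraMap ℂ (Bmod m r) (S5Aux.phi0 m r μ) with hν
  -- ν has zero constant term and nonzero w-coefficient
  have hφν : Bmod.coeff m r 0 ν = 0 := by
    rw [← S5Aux.phi0_coeff, hν, map_sub]
    have : S5Aux.phi0 m r (algebraMap ℂ (Bmod m r) (S5Aux.phi0 m r μ)) = S5Aux.phi0 m r μ := by
      rw [S5Aux.algebraMap_eq_mk, S5Aux.phi0_mk, Polynomial.eval_C]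
    rw [this, sub_self]
  have hν1 : Bmod.coeff m r 1 ν ≠ 0 := by
    rw [hν, S5Aux.coeff_sub m r (by omega), S5Aux.algebraMap_eq_mk,
      S5Aux.coeff_mk m r (by omega), Polynomial.coeff_C, if_neg one_ne_zero, sub_zero]
    exact hμ
  obtain ⟨ν₁, hν₁⟩ := S5Aux.exists_w_dvd m r ν hφν
  have hφν₁ : S5Aux.phi0 m r ν₁ = Bmod.coeff m r 1 ν := by
    rw [hν₁]
    have := S5Aux.coeff_w_pow_mul m r 1 1 (by omega) ν₁
    rw [pow_one] at this
    rw [this, if_pos (le_refl 1)]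
    rw [← S5Aux.phi0_coeff]
  -- ν^j * u lies in the image
  have hpowmem : ∀ j : ℕ, ∃ a, f a = ν ^ j * u := by
    intro j
    induction j with
    | zero => exact ⟨a₀, by rw [pow_zero, one_mul]⟩
    | succ j ih =>
      obtain ⟨a, ha⟩ := ih
      refine ⟨(algebraMap ℂ (Amod m) (r : ℂ)) • Db a
        - (algebraMap ℂ (Amod m) (S5Aux.phi0 m r μ)) • a, ?_⟩
      rw [← hfsub, ← hμmul, ← hsmul, Algebra.smul_def, ha]
      ring
  -- coefficients of ν^j * u
  have hcoe : ∀ j k : ℕ, k < m * r - r + 1 →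
      Bmod.coeff m r k (ν ^ j * u) =
        if j ≤ k then Bmod.coeff m r (k - j) (ν₁ ^ j * u) else 0 := by
    intro j k hk
    rw [show ν ^ j * u = Bmod.w m r ^ j * (ν₁ ^ j * u) by rw [hν₁, mul_pow]; ring]
    exact S5Aux.coeff_w_pow_mul m r j k hk _
  have hej : ∀ j : ℕ, j < m * r - r + 1 → Bmod.coeff m r j (ν ^ j * u) ≠ 0 := by
    intro j hj
    rw [hcoe j j hj, if_pos (le_refl j), Nat.sub_self, ← S5Aux.phi0_coeff,
      map_mul, map_pow, hφν₁]
    exact mul_ne_zero (pow_ne_zero j hν1) (by rw [S5Aux.phi0_coeff]; rw [S5Aux.phi0_coeff] at ha₀; exact ha₀)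
  -- main downward induction on the valuation
  have main : ∀ d : ℕ, ∀ b : Bmod m r,
      (∀ i, i < m * r - r + 1 - d → Bmod.coeff m r i b = 0) → ∃ a, f a = b := by
    intro d
    induction d with
    | zero =>
      intro b hb
      have : b = 0 := S5Aux.eq_zero_of_coeff_eq_zero m r b (fun i hi => hb i (by omega))
      exact ⟨0, by rw [hf0, this]⟩
    | succ d ih =>
      intro b hb
      by_cases hd : m * r - r + 1 ≤ d
      · exact ih b (fun i hi => hb i (by omega))
      · set j := m * r - r + 1 - (d + 1) with hj
        have hjn : j < m * r - r + 1 := by omega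
        set e := ν ^ j * u with he
        have hej' : Bmod.coeff m r j e ≠ 0 := hej j hjn
        set t := Bmod.coeff m r j b / Bmod.coeff m r j e with ht
        obtain ⟨a', ha'⟩ := ih (b - t • e) (by
          intro i hi
          have hin : i < m * r - r + 1 := by omega
          rw [S5Aux.coeff_sub m r hin, S5Aux.coeff_smul m r hin]
          rcases lt_or_eq_of_le (show i ≤ j by omega) with hij | hij
          · rw [hb i (by omega), he, hcoe j i hin, if_neg (by omega), mul_zero, sub_zero]
          · subst hij
            rw [ht, div_mul_cancel₀ _ hej', sub_self])
        obtain ⟨ae, hae⟩ := hpowmem j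
        refine ⟨a' + algebraMap ℂ (Amod m) t • ae, ?_⟩
        rw [← hfadd, ha', ← hsmul, hae, ← he]
        ring
  intro b
  obtain ⟨a, ha⟩ := main (m * r - r + 1) b (fun i hi => by omega)
  exact ⟨a, ha⟩

end
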